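/- arXiv:2408.10384 — 2 statements merged into one kernel-verified Lean document; each statement's English description precedes it below -/
import Mathlib

section
/- Let U be a Hilbert space, 𝒰 a Banach space with a bilinear pairing satisfying |⟨v,u⟩_U| ≤ ‖v‖_{𝒰*} ‖u‖_𝒰, and suppose G = F + ψ where F : U → ℝ is convex and differentiable, ψ proper closed convex, and u* satisfies the growth condition ⟨∇F(u*), u - u*⟩ + ψ(u) - ψ(u*) ≥ θ ‖u - u*‖_𝒰^ρ for all u ∈ U, with θ > 0, ρ ≥ 2. If u_N minimizes F_N + ψ where F_N is convex differentiable, then θ ‖u_N - u*‖_𝒰^{ρ-1} ≤ ‖∇F(u*) - ∇F_N(u*)‖_{𝒰*}. -/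
open scoped RealInnerProductSpace

lemma grad_subgrad {U : Type*} [NormedAddCommGroup U] [InnerProductSpace ℝ U] [CompleteSpace U]
    {F : U → ℝ} {g x : U} (hconv : ConvexOn ℝ Set.univ F) (hg : HasGradientAt F g x) (y : U) :
    F x + ⟪g, y - x⟫ ≤ F y := by
  set d := y - x with hd
  have hL : ∀ t : ℝ, HasDerivAt (fun t : ℝ => x + t • d) d t := by
    intro t
    simpa using ((hasDerivAt_id t).smul_const d).const_add x
  have hcomp : HasDerivAt (fun t : ℝ => F (x + t • d)) ⟪g, d⟫ 0 := by
    have hF0 : HasFDerivAt F ((InnerProductSpace.toDual ℝ U) g) (x + (0:ℝ) • d) := by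
      simpa using hg.hasFDerivAt
    have h1 := hF0.comp_hasDerivAt 0 (hL 0)
    simp at h1
    exact h1
  have hslope : Filter.Tendsto (fun t : ℝ => (F (x + t • d) - F x) / t)
      (nhdsWithin 0 (Set.Ioi 0)) (nhds ⟪g, d⟫) := by
    have h := hcomp.hasDerivWithinAt (s := Set.Ioi (0:ℝ))
    have := hasDerivWithinAt_iff_tendsto_slope.mp h
    have h2 : Filter.Tendsto (slope (fun t : ℝ => F (x + t • d)) 0)
        (nhdsWithin 0 (Set.Ioi 0)) (nhds ⟪g, d⟫) := by
      refine this.mono_left (nhdsWithin_mono _ ?_)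
      intro t ht
      exact ⟨ht, ne_of_gt ht⟩
    refine h2.congr' ?_
    filter_upwards [self_mem_nhdsWithin] with t ht
    simp [slope, ht, div_eq_inv_mul]
  have hbound : ∀ᶠ t in nhdsWithin (0:ℝ) (Set.Ioi 0),
      (F (x + t • d) - F x) / t ≤ F y - F x := by
    filter_upwards [Ioo_mem_nhdsGT_of_mem (by norm_num : (0:ℝ) ∈ Set.Ico 0 1)] with t ht
    obtain ⟨ht0, ht1⟩ := ht
    have hconvex := hconv.2 (Set.mem_univ y) (Set.mem_univ x)
      (le_of_lt ht0) (by linarith : (0:ℝ) ≤ 1 - t) (by ring)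
    have heq : t • y + (1 - t) • x = x + t • d := by
      simp [hd, smul_sub, sub_smul]; abel
    rw [heq] at hconvex
    rw [div_le_iff₀ ht0]
    simp only [smul_eq_mul] at hconvex
    nlinarith
  have : (⟪g, d⟫ : ℝ) ≤ F y - F x := by
    refine le_of_tendsto hslope hbound
  linarith

/-- under the growth condition with exponent `ρ ≥ 2` at the minimizer `u*`
of `F + ψ`, any minimizer `u_N` of `F_N + ψ` satisfies
`θ ‖u_N - u*‖_𝒰^{ρ-1} ≤ ‖∇F(u*) - ∇F_N(u*)‖_{𝒰*}`.
The `𝒰`-norm `nU` and the `𝒰*`-norm `nStar` are encoded as nonnegative functions on `U`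
satisfying the Hölder-type pairing inequality. -/
theorem stmt3
    {U : Type*} [NormedAddCommGroup U] [InnerProductSpace ℝ U] [CompleteSpace U]
    (S : Set U) (ψ : U → ℝ)
    (hS_ne : S.Nonempty) (hS_closed : IsClosed S) (hS_convex : Convex ℝ S)
    (hψ_convex : ConvexOn ℝ S ψ) (hψ_lsc : LowerSemicontinuousOn ψ S)
    -- the 𝒰-norm and 𝒰*-norm on U with the Hölder-type pairing inequality:
    (nU nStar : U → ℝ)
    (hnU : ∀ x, 0 ≤ nU x) (hnStar : ∀ x, 0 ≤ nStar x)
    (hpair : ∀ v u : U, |⟪v, u⟫| ≤ nStar v * nU u)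
    -- F, F_N convex and differentiable:
    (F FN : U → ℝ) (gradF gradFN : U → U)
    (hFconv : ConvexOn ℝ Set.univ F) (hFNconv : ConvexOn ℝ Set.univ FN)
    (hF : ∀ x, HasGradientAt F (gradF x) x)
    (hFN : ∀ x, HasGradientAt FN (gradFN x) x)
    (θ ρ : ℝ) (hθ : 0 < θ) (hρ : 2 ≤ ρ)
    (ustar : U) (hustar : ustar ∈ S)
    -- u* minimizes F + ψ:
    (hmin : ∀ u ∈ S, F ustar + ψ ustar ≤ F u + ψ u)
    -- growth condition at u*:
    (hgrowth : ∀ u : U, ⟪gradF ustar, u - ustar⟫ + ψ u - ψ ustar ≥ θ * nU (u - ustar) ^ ρ)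
    (uN : U) (huN : uN ∈ S)
    -- u_N minimizes F_N + ψ:
    (hminN : ∀ u ∈ S, FN uN + ψ uN ≤ FN u + ψ u) :
    θ * nU (uN - ustar) ^ (ρ - 1) ≤ nStar (gradF ustar - gradFN ustar) := by
  set d := uN - ustar with hd
  -- subgradient inequality for FN at ustar
  have hsub : FN ustar + ⟪gradFN ustar, d⟫ ≤ FN uN := grad_subgrad hFNconv (hFN ustar) uN
  have hopt : FN uN + ψ uN ≤ FN ustar + ψ ustar := hminN ustar hustar
  have hpsi : ψ uN - ψ ustar ≤ -⟪gradFN ustar, d⟫ := by linarith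
  have hg := hgrowth uN
  have key : θ * nU d ^ ρ ≤ ⟪gradF ustar - gradFN ustar, d⟫ := by
    rw [inner_sub_left]
    linarith
  have key2 : θ * nU d ^ ρ ≤ nStar (gradF ustar - gradFN ustar) * nU d :=
    key.trans ((le_abs_self _).trans (hpair _ _))
  rcases eq_or_lt_of_le (hnU d) with h0 | h0
  · rw [← h0]
    rw [Real.zero_rpow (by linarith : ρ - 1 ≠ 0)]
    simpa using hnStar _
  · have hpow : nU d ^ ρ = nU d ^ (ρ - 1) * nU d := by
      rw [← Real.rpow_add_one (ne_of_gt h0)]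
      ring_nf
    rw [hpow, ← mul_assoc] at key2
    exact le_of_mul_le_mul_right key2 h0
end

section
/- Let U, 𝒰, 𝒰*, ℋ satisfy the Hölder-type setting: |⟨v,u⟩_U| ≤ ‖v‖_{𝒰*}‖u‖_𝒰 for v ∈ 𝒰*, u ∈ U, and ℋ ↪ 𝒰* with embedding constant C. Suppose F, F_N are convex continuously differentiable on U with the growth condition ⟨∇F(u*), u - u*⟩ + ψ(u) - ψ(u*) ≥ θ‖u - u*‖²_𝒰 for all u ∈ U at the minimizer u* of F + ψ, and u_N minimizes F_N + ψ. If ∇F(u*) - ∇F_N(u*) ∈ ℋ, then θ‖u_N - u*‖_𝒰 ≤ C ‖∇F(u*) - ∇F_N(u*)‖_ℋ. -/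
open scoped RealInnerProductSpace
open Filter Topology

lemma grad_ineq' {U : Type*} [NormedAddCommGroup U] [InnerProductSpace ℝ U] [CompleteSpace U]
    {f : U → ℝ} {g x : U} (hf : ConvexOn ℝ Set.univ f) (hg : HasGradientAt f g x) (y : U) :
    ⟪g, y - x⟫ ≤ f y - f x := by
  set φ : ℝ → ℝ := fun t => f (x + t • (y - x)) with hφdef
  have hφ : HasDerivAt φ ⟪g, y - x⟫ 0 := by
    have h1 : HasFDerivAt f ((InnerProductSpace.toDual ℝ U) g) x := hg
    have hline : HasDerivAt (fun t : ℝ => x + t • (y - x)) (y - x) 0 := by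
      simpa using ((hasDerivAt_id (0:ℝ)).smul_const (y - x)).const_add x
    have := (show HasFDerivAt f ((InnerProductSpace.toDual ℝ U) g) (x + (0:ℝ) • (y - x)) by simpa using h1).comp_hasDerivAt 0 hline
    simp only [InnerProductSpace.toDual_apply_apply, Function.comp_def] at this
    exact this
  have hslope : ∀ᶠ t in 𝓝[>] (0:ℝ), slope φ 0 t ≤ f y - f x := by
    filter_upwards [Ioc_mem_nhdsGT_of_mem (by simp : (0:ℝ) ∈ Set.Ico 0 1)] with t ht
    have h01 : 0 ≤ 1 - t := by linarith [ht.2]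
    have hc := hf.2 (Set.mem_univ x) (Set.mem_univ y) h01 (le_of_lt ht.1) (by ring)
    simp only [smul_eq_mul] at hc
    have hxy : (1 - t) • x + t • y = x + t • (y - x) := by
      simp [smul_sub, sub_smul]; abel
    rw [hxy] at hc
    have : φ t - φ 0 ≤ t * (f y - f x) := by
      simp only [hφdef, zero_smul, add_zero]
      calc f (x + t • (y - x)) - f x ≤ (1 - t) * f x + t * f y - f x := by linarith
        _ = t * (f y - f x) := by ring
    rw [slope_def_field]
    rw [sub_zero, div_le_iff₀ ht.1]
    linarith
  have htends : Tendsto (slope φ 0) (𝓝[>] (0:ℝ)) (𝓝 ⟪g, y - x⟫) :=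
    (hasDerivAt_iff_tendsto_slope.mp hφ).mono_left
      (nhdsWithin_mono _ (fun t ht => ne_of_gt ht))
  have := le_of_tendsto htends hslope
  simpa [hφdef] using this


/-- with the Hölder-type pairing, the quadratic growth condition at the
minimizer `u*` of `F + ψ`, and the embedding `ℋ ↪ 𝒰*` with constant `C`, any minimizer
`u_N` of `F_N + ψ` satisfies `θ‖u_N - u*‖_𝒰 ≤ C‖∇F(u*) - ∇F_N(u*)‖_ℋ` provided
`∇F(u*) - ∇F_N(u*) ∈ ℋ`. The 𝒰-norm `nU`, 𝒰*-norm `nStar`, and ℋ-norm `nH` are encoded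
as nonnegative functions on `U`, `Hset ⊆ U` being the image of `ℋ`. -/
theorem stmt13
    {U : Type*} [NormedAddCommGroup U] [InnerProductSpace ℝ U] [CompleteSpace U]
    (S : Set U) (ψ : U → ℝ)
    (hS_ne : S.Nonempty) (hS_closed : IsClosed S) (hS_convex : Convex ℝ S)
    (hψ_convex : ConvexOn ℝ S ψ) (hψ_lsc : LowerSemicontinuousOn ψ S)
    (nU nStar nH : U → ℝ) (Hset : Set U)
    (hnU : ∀ x, 0 ≤ nU x) (hnStar : ∀ x, 0 ≤ nStar x) (hnH : ∀ x, 0 ≤ nH x)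
    -- Hölder-type pairing inequality:
    (hpair : ∀ v u : U, |⟪v, u⟫| ≤ nStar v * nU u)
    -- embedding ℋ ↪ 𝒰* with constant C:
    (C : ℝ) (hC : 0 < C) (hembed : ∀ v ∈ Hset, nStar v ≤ C * nH v)
    (F FN : U → ℝ) (gradF gradFN : U → U)
    (hFconv : ConvexOn ℝ Set.univ F) (hFNconv : ConvexOn ℝ Set.univ FN)
    (hF : ∀ x, HasGradientAt F (gradF x) x)
    (hFN : ∀ x, HasGradientAt FN (gradFN x) x)
    (θ : ℝ) (hθ : 0 < θ)
    (ustar : U) (hustar : ustar ∈ S)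
    (hmin : ∀ u ∈ S, F ustar + ψ ustar ≤ F u + ψ u)
    -- quadratic growth condition at u*:
    (hgrowth : ∀ u : U, ⟪gradF ustar, u - ustar⟫ + ψ u - ψ ustar ≥ θ * nU (u - ustar) ^ 2)
    (uN : U) (huN : uN ∈ S)
    (hminN : ∀ u ∈ S, FN uN + ψ uN ≤ FN u + ψ u)
    -- ∇F(u*) - ∇F_N(u*) ∈ ℋ:
    (hmem : gradF ustar - gradFN ustar ∈ Hset) :
    θ * nU (uN - ustar) ≤ C * nH (gradF ustar - gradFN ustar) := by
  set d := uN - ustar with hd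
  set w := gradF ustar - gradFN ustar with hw
  have key : θ * nU d ^ 2 ≤ ⟪w, d⟫ := by
    have h1 := hgrowth uN
    have h2 : FN uN + ψ uN ≤ FN ustar + ψ ustar := hminN ustar hustar
    have h3 : ⟪gradFN ustar, d⟫ ≤ FN uN - FN ustar := grad_ineq' hFNconv (hFN ustar) uN
    have h4 : ⟪w, d⟫ = ⟪gradF ustar, d⟫ - ⟪gradFN ustar, d⟫ := by
      rw [hw, inner_sub_left]
    linarith
  have hbd : ⟪w, d⟫ ≤ C * nH w * nU d :=
    le_trans (le_trans (le_abs_self _) (hpair w d))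
      (mul_le_mul_of_nonneg_right (hembed w hmem) (hnU d))
  rcases eq_or_lt_of_le (hnU d) with h0 | h0
  · rw [← h0, mul_zero]
    exact mul_nonneg hC.le (hnH w)
  · have : θ * nU d * nU d ≤ C * nH w * nU d := by
      calc θ * nU d * nU d = θ * nU d ^ 2 := by ring
        _ ≤ ⟪w, d⟫ := key
        _ ≤ C * nH w * nU d := hbd
    exact le_of_mul_le_mul_right this h0
end
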